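/- Let n ≥ 2, let s ∈ ℝ^{n−1}, and let θ ∈ (0, π) satisfy sin(nθ) ≠ 0. Then cos θ ∉ {cos(jπ/n) : j = 1,…,n−1}, and Σ_{j=1}^{n−1} s_j / (cos θ − cos(jπ/n)) = (2 / sin(nθ)) · Σ_{ℓ=1}^{n−1} b_ℓ · sin(ℓθ), where b_ℓ = Σ_{j=1}^{n−1} (−1)^{j+1} · s_j · sin(ℓjπ/n) / sin(jπ/n). -/

import Mathlib

open Finset Real

lemma tele (φ θ : ℝ) (m : ℕ) :
    2 * (Real.cos θ - Real.cos φ) * ∑ l ∈ Finset.range (m + 1), Real.sin (l * φ) * Real.sin (l * θ)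
      = Real.sin (m * φ) * Real.sin ((m + 1) * θ) - Real.sin ((m + 1) * φ) * Real.sin (m * θ) := by
  induction m with
  | zero => simp
  | succ m ih =>
    rw [Finset.sum_range_succ, mul_add, ih]
    push_cast
    rw [show ((m : ℝ) + 1) * θ = m * θ + θ by ring, show ((m : ℝ) + 1) * φ = m * φ + φ by ring,
      show ((m : ℝ) + 1 + 1) * θ = m * θ + θ + θ by ring,
      show ((m : ℝ) + 1 + 1) * φ = m * φ + φ + φ by ring]
    simp only [Real.sin_add, Real.cos_add]
    ring_nf
    simp only [Real.sin_sq]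
    ring

/-- **core identity of the Fast DCT+.** For `n ≥ 2`, `s ∈ ℝ^{n−1}`, and
`θ ∈ (0, π)` with `sin(nθ) ≠ 0`, the point `cos θ` differs from every node `cos(jπ/n)`, and
`Σ_{j=1}^{n−1} s_j / (cos θ − cos(jπ/n)) = (2 / sin(nθ)) Σ_{ℓ=1}^{n−1} b_ℓ sin(ℓθ)` where
`b_ℓ = Σ_{j=1}^{n−1} (−1)^{j+1} s_j sin(ℓjπ/n) / sin(jπ/n)`. -/
theorem stmt11 (n : ℕ) (hn : 2 ≤ n) (s : ℕ → ℝ) (θ : ℝ)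
    (hθ0 : 0 < θ) (hθπ : θ < Real.pi)
    (hsin : Real.sin (n * θ) ≠ 0) :
    (∀ j ∈ Finset.Icc 1 (n - 1), Real.cos θ ≠ Real.cos (j * Real.pi / n)) ∧
    ∑ j ∈ Finset.Icc 1 (n - 1), s j / (Real.cos θ - Real.cos (j * Real.pi / n))
      = (2 / Real.sin (n * θ)) *
          ∑ l ∈ Finset.Icc 1 (n - 1),
            (∑ j ∈ Finset.Icc 1 (n - 1),
                (-1 : ℝ) ^ (j + 1) * s j * Real.sin (l * j * Real.pi / n)
                  / Real.sin (j * Real.pi / n))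
              * Real.sin (l * θ) := by
  have hn1 : 1 ≤ n := le_trans one_le_two hn
  have hnR : (0 : ℝ) < n := by exact_mod_cast (by omega : 0 < n)
  have hnR' : (n : ℝ) ≠ 0 := ne_of_gt hnR
  -- the key per-node identity
  have key : ∀ j ∈ Finset.Icc 1 (n - 1),
      2 * (Real.cos θ - Real.cos (j * Real.pi / n)) *
          ∑ l ∈ Finset.range n, Real.sin (l * (j * Real.pi / n)) * Real.sin (l * θ)
        = (-1 : ℝ) ^ (j + 1) * Real.sin (j * Real.pi / n) * Real.sin (n * θ) := by
    intro j hj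
    obtain ⟨hj1, hj2⟩ := Finset.mem_Icc.mp hj
    have h := tele (j * Real.pi / n) θ (n - 1)
    rw [Nat.sub_add_cancel hn1] at h
    have hc : ((n - 1 : ℕ) : ℝ) = (n : ℝ) - 1 := by
      rw [Nat.cast_sub hn1]; norm_num
    rw [hc] at h
    have e1 : ((n : ℝ) - 1 + 1) * (j * Real.pi / n) = j * Real.pi := by field_simp; ring
    have e2 : ((n : ℝ) - 1) * (j * Real.pi / n) = j * Real.pi - j * Real.pi / n := by
      field_simp
    rw [e1, e2, Real.sin_nat_mul_pi, Real.sin_sub, Real.sin_nat_mul_pi] at h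
    have hcj : Real.cos ((j : ℝ) * Real.pi) = (-1 : ℝ) ^ j := by
      simpa using Real.cos_nat_mul_pi_sub 0 j
    rw [hcj] at h
    rw [h]
    ring
  have hφpos : ∀ j ∈ Finset.Icc 1 (n - 1), 0 < Real.sin ((j : ℝ) * Real.pi / n) := by
    intro j hj
    obtain ⟨hj1, hj2⟩ := Finset.mem_Icc.mp hj
    apply Real.sin_pos_of_pos_of_lt_pi
    · positivity
    · rw [div_lt_iff₀ hnR]
      have : (j : ℝ) < n := by
        exact_mod_cast lt_of_le_of_lt hj2 (Nat.sub_lt (lt_of_lt_of_le Nat.zero_lt_two hn) one_pos)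
      nlinarith [Real.pi_pos]
  have hne : ∀ j ∈ Finset.Icc 1 (n - 1),
      Real.cos θ ≠ Real.cos ((j : ℝ) * Real.pi / n) := by
    intro j hj hEq
    have h := key j hj
    rw [hEq, sub_self, mul_zero, zero_mul] at h
    have hφ := hφpos j hj
    have : (-1 : ℝ) ^ (j + 1) * Real.sin ((j : ℝ) * Real.pi / n) * Real.sin (n * θ) ≠ 0 := by
      apply mul_ne_zero (mul_ne_zero _ (ne_of_gt hφ)) hsin
      exact pow_ne_zero _ (by norm_num)
    exact this h.symm
  refine ⟨hne, ?_⟩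
  -- rearrange the RHS: swap sums
  simp only [Finset.mul_sum, Finset.sum_mul]
  rw [Finset.sum_comm]
  apply Finset.sum_congr rfl
  intro j hj
  rw [← Finset.mul_sum]
  have hφ := hφpos j hj
  have hkey := key j hj
  have hcd : Real.cos θ - Real.cos ((j : ℝ) * Real.pi / n) ≠ 0 :=
    sub_ne_zero_of_ne (hne j hj)
  -- extend the inner sum from Icc 1 (n-1) to range n
  have hext : ∑ l ∈ Finset.Icc 1 (n - 1),
      (-1 : ℝ) ^ (j + 1) * s j * Real.sin (l * j * Real.pi / n)
        / Real.sin (j * Real.pi / n) * Real.sin (l * θ)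
      = ((-1 : ℝ) ^ (j + 1) * s j / Real.sin ((j : ℝ) * Real.pi / n)) *
          ∑ l ∈ Finset.range n, Real.sin (l * ((j : ℝ) * Real.pi / n)) * Real.sin (l * θ) := by
    rw [Finset.mul_sum]
    rw [Finset.sum_subset (fun l hl => Finset.mem_range.mpr
      (lt_of_le_of_lt (Finset.mem_Icc.mp hl).2 (Nat.sub_lt (lt_of_lt_of_le Nat.zero_lt_two hn) one_pos)))]
    · apply Finset.sum_congr rfl
      intro l _
      rw [show (l : ℝ) * j * Real.pi / n = l * ((j : ℝ) * Real.pi / n) by ring]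
      ring
    · intro l hl hl'
      have : l = 0 := by
        simp only [Finset.mem_Icc, not_and, not_le] at hl'
        rcases Nat.eq_zero_or_pos l with h0 | h0
        · exact h0
        · exact absurd (hl' h0) (not_lt.mpr (Nat.le_sub_one_of_lt (Finset.mem_range.mp hl)))
      simp [this]
  rw [hext]
  have hε : ((-1 : ℝ) ^ (j + 1)) * ((-1 : ℝ) ^ (j + 1)) = 1 := by
    rw [← pow_add]
    exact Even.neg_one_pow ⟨j + 1, by ring⟩
  have hS : ∑ l ∈ Finset.range n, Real.sin (l * ((j : ℝ) * Real.pi / n)) * Real.sin (l * θ)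
      = (-1 : ℝ) ^ (j + 1) * Real.sin ((j : ℝ) * Real.pi / n) * Real.sin (n * θ)
          / (2 * (Real.cos θ - Real.cos ((j : ℝ) * Real.pi / n))) := by
    rw [eq_div_iff (by positivity)]
    linarith [hkey]
  rw [hS]
  have hcalc : (2 / Real.sin ((n : ℝ) * θ)) * ((-1 : ℝ) ^ (j + 1) * s j / Real.sin ((j : ℝ) * Real.pi / n)
        * ((-1 : ℝ) ^ (j + 1) * Real.sin ((j : ℝ) * Real.pi / n) * Real.sin (n * θ)
            / (2 * (Real.cos θ - Real.cos ((j : ℝ) * Real.pi / n)))))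
      = ((-1 : ℝ) ^ (j + 1) * (-1 : ℝ) ^ (j + 1)) * (s j / (Real.cos θ - Real.cos ((j : ℝ) * Real.pi / n))) := by
    field_simp
  rw [hcalc, hε, one_mul]
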